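/- In the DIBI Hilbert system, the sequent P ∗ Q ⊢ P ▷ Q is derivable for all DIBI formulas P and Q. -/
import Mathlib


/-- Formulas of the logic DIBI. -/
inductive Formula (AP : Type*) : Type _ where
  | atom : AP → Formula AP
  | top : Formula AP
  | bot : Formula AP
  | emp : Formula AP            -- the multiplicative unit I
  | and : Formula AP → Formula AP → Formula AP
  | or : Formula AP → Formula AP → Formula AP
  | imp : Formula AP → Formula AP → Formula AP
  | sep : Formula AP → Formula AP → Formula AP      -- P ∗ Q
  | wand : Formula AP → Formula AP → Formula AP     -- P -∗ Q
  | tri : Formula AP → Formula AP → Formula AP      -- P ▷ Q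
  | triimpR : Formula AP → Formula AP → Formula AP  -- P ▷→ Q
  | triimpL : Formula AP → Formula AP → Formula AP  -- P ▷- Q
/-- The DIBI Hilbert system: derivability of sequents `P ⊢ Q`. -/
inductive Deriv {AP : Type*} : Formula AP → Formula AP → Prop where
  -- intuitionistic rules
  | ax (P : Formula AP) : Deriv P P
  | top_right (P : Formula AP) : Deriv P .top
  | bot_left (P : Formula AP) : Deriv .bot P
  | or_left {P Q R : Formula AP} : Deriv P R → Deriv Q R → Deriv (.or P Q) R
  | or_right1 {P Q1 : Formula AP} (Q2 : Formula AP) : Deriv P Q1 → Deriv P (.or Q1 Q2)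
  | or_right2 {P Q2 : Formula AP} (Q1 : Formula AP) : Deriv P Q2 → Deriv P (.or Q1 Q2)
  | and_right {P Q R : Formula AP} : Deriv P Q → Deriv P R → Deriv P (.and Q R)
  | and_left {Q R : Formula AP} (P : Formula AP) : Deriv Q R → Deriv (.and P Q) R
  | and_elim1 {P Q1 Q2 : Formula AP} : Deriv P (.and Q1 Q2) → Deriv P Q1
  | and_elim2 {P Q1 Q2 : Formula AP} : Deriv P (.and Q1 Q2) → Deriv P Q2
  | imp_intro {P Q R : Formula AP} : Deriv (.and P Q) R → Deriv P (.imp Q R)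
  | mp {P Q R : Formula AP} : Deriv P (.imp Q R) → Deriv P Q → Deriv P R
  -- adjunction and modus ponens rules for -∗, ▷→, ▷-
  | wand_intro {P Q R : Formula AP} : Deriv (.sep P Q) R → Deriv P (.wand Q R)
  | wand_mp {P Q R S : Formula AP} : Deriv P (.wand Q R) → Deriv S Q → Deriv (.sep P S) R
  | triimpR_intro {P Q R : Formula AP} : Deriv (.tri P Q) R → Deriv P (.triimpR Q R)
  | triimpR_mp {P Q R S : Formula AP} : Deriv P (.triimpR Q R) → Deriv S Q → Deriv (.tri P S) R
  | triimpL_intro {P Q R : Formula AP} : Deriv (.tri P Q) R → Deriv Q (.triimpL P R)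
  | triimpL_mp {P Q R S : Formula AP} : Deriv P (.triimpL Q R) → Deriv S Q → Deriv (.tri S P) R
  -- (∗, I) is a commutative monoid up to interderivability
  | sep_unit1 (P : Formula AP) : Deriv P (.sep P .emp)
  | sep_unit2 (P : Formula AP) : Deriv (.sep P .emp) P
  | sep_conj {P Q R S : Formula AP} : Deriv P R → Deriv Q S → Deriv (.sep P Q) (.sep R S)
  | sep_comm (P Q : Formula AP) : Deriv (.sep P Q) (.sep Q P)
  | sep_assoc1 (P Q R : Formula AP) : Deriv (.sep (.sep P Q) R) (.sep P (.sep Q R))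
  | sep_assoc2 (P Q R : Formula AP) : Deriv (.sep P (.sep Q R)) (.sep (.sep P Q) R)
  -- rules for ▷
  | tri_left_unit (P : Formula AP) : Deriv P (.tri .emp P)
  | tri_right_unit1 (P : Formula AP) : Deriv P (.tri P .emp)
  | tri_right_unit2 (P : Formula AP) : Deriv (.tri P .emp) P
  | tri_conj {P Q R S : Formula AP} : Deriv P R → Deriv Q S → Deriv (.tri P Q) (.tri R S)
  | tri_assoc1 (P Q R : Formula AP) : Deriv (.tri (.tri P Q) R) (.tri P (.tri Q R))
  | tri_assoc2 (P Q R : Formula AP) : Deriv (.tri P (.tri Q R)) (.tri (.tri P Q) R)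
  -- reverse exchange
  | rev_ex (P Q R S : Formula AP) :
      Deriv (.sep (.tri P Q) (.tri R S)) (.tri (.sep P R) (.sep Q S))


theorem Deriv.cut {AP : Type*} {P Q R : Formula AP} (h1 : Deriv P Q) (h2 : Deriv Q R) :
    Deriv P R :=
  Deriv.mp (Deriv.imp_intro (Deriv.and_left P h2)) h1

/-- In the DIBI Hilbert system, `P ∗ Q ⊢ P ▷ Q` is derivable for all formulas. -/
theorem sep_deriv_tri {AP : Type*} (P Q : Formula AP) :
    Deriv (.sep P Q) (.tri P Q) := by
  have h1 : Deriv (.sep P Q) (.sep (.tri P .emp) (.tri .emp Q)) :=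
    .sep_conj (.tri_right_unit1 P) (.tri_left_unit Q)
  have h2 := h1.cut (Deriv.rev_ex P .emp .emp Q)
  exact h2.cut (.tri_conj (.sep_unit2 P) ((Deriv.sep_comm _ _).cut (.sep_unit2 Q)))
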